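/- Let G be a finite simple graph with maximum degree Δ(G) = 3. If mad(G) < 36/13, then the injective chromatic number of G satisfies χ_i(G) ≤ 5. -/

import Mathlib

open SimpleGraph

/-- An injective coloring of `G`: any two distinct vertices with a common neighbor
receive distinct colors. -/
def IsInjColoring {V α : Type*} (G : SimpleGraph V) (c : V → α) : Prop :=
  ∀ ⦃u v : V⦄, u ≠ v → (∃ w, G.Adj u w ∧ G.Adj v w) → c u ≠ c v

/-- The injective chromatic number of `G`: the least `k` such that `G` has an
injective coloring with `k` colors. -/
noncomputable def injChromNum {V : Type*} (G : SimpleGraph V) : ℕ :=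
  sInf {k | ∃ c : V → Fin k, IsInjColoring G c}


section Aux

open Finset

variable {V : Type*} [Fintype V] [DecidableEq V] {G : SimpleGraph V} [DecidableRel G.Adj]

lemma local_struct (hΔ : ∀ v, G.degree v ≤ 3) {S : Finset V} {v : V} (hvS : v ∈ S)
    (h5 : 5 ≤ ((S.erase v).filter (fun w => ∃ u, G.Adj v u ∧ G.Adj w u)).card) :
    G.degree v = 3 ∧ (∀ u ∈ G.neighborFinset v, 2 ≤ (G.neighborFinset u ∩ S).card) ∧
      ((G.neighborFinset v).filter
        (fun u => (G.neighborFinset u ∩ S).card = 2)).card ≤ 1 := by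
  set dS := fun u => (G.neighborFinset u ∩ S).card with hdS
  have hdS3 : ∀ u, dS u ≤ 3 := fun u =>
    le_trans (card_le_card (inter_subset_left)) (by rw [card_neighborFinset_eq_degree]; exact hΔ u)
  have hvmem : ∀ u ∈ G.neighborFinset v, v ∈ G.neighborFinset u ∩ S := by
    intro u hu
    rw [mem_neighborFinset] at hu
    exact mem_inter.2 ⟨(mem_neighborFinset _ _ _).2 hu.symm, hvS⟩
  have hdS1 : ∀ u ∈ G.neighborFinset v, 1 ≤ dS u := fun u hu =>
    card_pos.2 ⟨v, hvmem u hu⟩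
  have hsub : (S.erase v).filter (fun w => ∃ u, G.Adj v u ∧ G.Adj w u) ⊆
      (G.neighborFinset v).biUnion (fun u => (G.neighborFinset u ∩ S).erase v) := by
    intro w hw
    rw [mem_filter, mem_erase] at hw
    obtain ⟨⟨hwv, hwS⟩, u, hvu, hwu⟩ := hw
    refine mem_biUnion.2 ⟨u, (mem_neighborFinset _ _ _).2 hvu, mem_erase.2 ⟨hwv, ?_⟩⟩
    exact mem_inter.2 ⟨(mem_neighborFinset _ _ _).2 hwu.symm, hwS⟩
  have h5' : 5 ≤ ∑ u ∈ G.neighborFinset v, ((G.neighborFinset u ∩ S).erase v).card :=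
    le_trans h5 (le_trans (card_le_card hsub) card_biUnion_le)
  have herase : ∀ u ∈ G.neighborFinset v, ((G.neighborFinset u ∩ S).erase v).card = dS u - 1 :=
    fun u hu => card_erase_of_mem (hvmem u hu)
  rw [Finset.sum_congr rfl herase] at h5'
  have hsum2 : ∑ u ∈ G.neighborFinset v, (dS u - 1) ≤ 2 * G.degree v := by
    calc ∑ u ∈ G.neighborFinset v, (dS u - 1) ≤ ∑ _u ∈ G.neighborFinset v, 2 :=
          Finset.sum_le_sum (fun u _ => by have := hdS3 u; omega)
      _ = 2 * G.degree v := by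
          rw [Finset.sum_const, card_neighborFinset_eq_degree, smul_eq_mul, Nat.mul_comm]
  have hdeg : G.degree v = 3 := by have := hΔ v; omega
  have hcard : (G.neighborFinset v).card = 3 := by rwa [card_neighborFinset_eq_degree]
  have hsum8 : 8 ≤ ∑ u ∈ G.neighborFinset v, dS u := by
    have : ∑ u ∈ G.neighborFinset v, dS u
        = ∑ u ∈ G.neighborFinset v, ((dS u - 1) + 1) :=
      Finset.sum_congr rfl (fun u hu => by have := hdS1 u hu; omega)
    rw [this, Finset.sum_add_distrib, Finset.sum_const, hcard, smul_eq_mul] at *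
    omega
  refine ⟨hdeg, ?_, ?_⟩
  · intro u hu
    show 2 ≤ dS u
    by_contra hlt
    have h1 : dS u ≤ 1 := by omega
    have hsplit : ∑ x ∈ G.neighborFinset v, dS x
        = dS u + ∑ x ∈ (G.neighborFinset v).erase u, dS x :=
      (Finset.add_sum_erase _ _ hu).symm
    have hrest : ∑ x ∈ (G.neighborFinset v).erase u, dS x ≤ 6 := by
      calc ∑ x ∈ (G.neighborFinset v).erase u, dS x
          ≤ ∑ _x ∈ (G.neighborFinset v).erase u, 3 :=
            Finset.sum_le_sum (fun x _ => hdS3 x)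
        _ = 6 := by rw [Finset.sum_const, card_erase_of_mem hu, hcard]; rfl
    omega
  · by_contra hgt
    rw [not_le] at hgt
    obtain ⟨u0, hu0, u1, hu1, hne⟩ := Finset.one_lt_card.1 hgt
    rw [mem_filter] at hu0 hu1
    have hsplit : ∑ x ∈ G.neighborFinset v, dS x
        = dS u0 + ∑ x ∈ (G.neighborFinset v).erase u0, dS x :=
      (Finset.add_sum_erase _ _ hu0.1).symm
    have hu1' : u1 ∈ (G.neighborFinset v).erase u0 := mem_erase.2 ⟨fun h => hne h.symm, hu1.1⟩
    have hsplit2 : ∑ x ∈ (G.neighborFinset v).erase u0, dS x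
        = dS u1 + ∑ x ∈ ((G.neighborFinset v).erase u0).erase u1, dS x :=
      (Finset.add_sum_erase _ _ hu1').symm
    have hrest : ∑ x ∈ ((G.neighborFinset v).erase u0).erase u1, dS x ≤ 3 := by
      calc ∑ x ∈ ((G.neighborFinset v).erase u0).erase u1, dS x
          ≤ ∑ _x ∈ ((G.neighborFinset v).erase u0).erase u1, 3 :=
            Finset.sum_le_sum (fun x _ => hdS3 x)
        _ ≤ 3 := by
            rw [Finset.sum_const, card_erase_of_mem hu1', card_erase_of_mem hu0.1, hcard]
            rfl
    have h20 : dS u0 = 2 := hu0.2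
    have h21 : dS u1 = 2 := hu1.2
    omega

lemma double_count (G : SimpleGraph V) [DecidableRel G.Adj] (A B : Finset V) :
    ∑ v ∈ A, (G.neighborFinset v ∩ B).card = ∑ u ∈ B, (G.neighborFinset u ∩ A).card := by
  have key : ∀ (A B : Finset V) (v : V),
      (G.neighborFinset v ∩ B).card = ∑ u ∈ B, if G.Adj v u then 1 else 0 := by
    intro A B v
    rw [← Finset.card_filter]
    congr 1
    ext u
    simp [mem_neighborFinset, and_comm]
  simp only [key A B, key B A]
  rw [Finset.sum_comm]
  refine Finset.sum_congr rfl fun u _ => Finset.sum_congr rfl fun v _ => ?_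
  simp [G.adj_comm]


lemma subgraph_handshake (W : Finset V) :
    2 * ((⊤ : G.Subgraph).induce (↑W : Set V)).edgeSet.ncard
      = ∑ w ∈ W, (G.neighborFinset w ∩ W).card := by
  classical
  set H := (⊤ : G.Subgraph).induce (↑W : Set V) with hH
  have hadj : ∀ x y : V, H.Adj x y ↔ x ∈ W ∧ y ∈ W ∧ G.Adj x y := by
    intro x y
    rw [hH, Subgraph.induce_adj, Subgraph.top_adj]
    simp only [Finset.mem_coe]
  have hverts : H.verts = (↑W : Set V) := rfl
  letI : Fintype H.verts := by rw [hverts]; infer_instance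
  letI : DecidableRel H.coe.Adj := Classical.decRel _
  letI : Fintype H.coe.edgeSet := Fintype.ofFinite _
  have key : ∀ (inst : ∀ v : H.verts, Fintype (H.coe.neighborSet v)) (v : H.verts),
      @degree _ H.coe v (inst v) = (G.neighborFinset ↑v ∩ W).card := by
    intro inst v
    show ((H.coe.neighborSet v).toFinset).card = _
    refine Finset.card_bij (fun u _ => (u : V)) ?_ ?_ ?_
    · intro u hu
      rw [Set.mem_toFinset] at hu
      have h1 : H.Adj ↑v ↑u := hu
      rw [hadj] at h1
      exact mem_inter.2 ⟨(mem_neighborFinset _ _ _).2 h1.2.2, h1.2.1⟩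
    · intro u _ u' _ h
      exact Subtype.ext h
    · intro u hu
      rw [mem_inter, mem_neighborFinset] at hu
      refine ⟨⟨u, ?_⟩, ?_, rfl⟩
      · show u ∈ (↑W : Set V); exact_mod_cast hu.2
      · rw [Set.mem_toFinset]
        show H.Adj ↑v u
        rw [hadj]
        exact ⟨by exact_mod_cast v.2, hu.2, hu.1⟩
  have hedge : ∀ (inst : Fintype H.coe.edgeSet),
      (@edgeFinset _ H.coe inst).card = H.edgeSet.ncard := by
    intro inst
    show (H.coe.edgeSet.toFinset).card = _
    rw [Set.toFinset_card, ← Nat.card_eq_fintype_card, Nat.card_coe_set_eq]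
    rw [← Subgraph.image_coe_edgeSet_coe,
      Set.ncard_image_of_injective _ (Sym2.map.injective Subtype.coe_injective)]
  have hhs := H.coe.sum_degrees_eq_twice_card_edges
  simp only [key, hedge] at hhs
  have hsum : ∑ v : H.verts, (G.neighborFinset ↑v ∩ W).card
      = ∑ w ∈ W, (G.neighborFinset w ∩ W).card := by
    rw [Finset.sum_set_coe (s := H.verts) (f := fun w => (G.neighborFinset w ∩ W).card)]
    congr 1
    ext x
    simp [Set.mem_toFinset, hverts]
  rw [← hsum, ← hhs]
  exact Finset.sum_congr rfl (fun v _ => by convert key (fun _ => inferInstance) v)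


lemma exists_low_inj_degree (hΔ : ∀ v, G.degree v ≤ 3)
    (hmad : ∀ H : G.Subgraph, H.verts.Nonempty →
      (2 * H.edgeSet.ncard : ℚ) / H.verts.ncard < 36 / 13)
    (S : Finset V) (hS : S.Nonempty) :
    ∃ v ∈ S, ((S.erase v).filter (fun w => ∃ u, G.Adj v u ∧ G.Adj w u)).card ≤ 4 := by
  by_contra hcon
  push_neg at hcon
  have h5 : ∀ v ∈ S, 5 ≤ ((S.erase v).filter (fun w => ∃ u, G.Adj v u ∧ G.Adj w u)).card :=
    fun v hv => hcon v hv
  set dS := fun u => (G.neighborFinset u ∩ S).card with hdS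
  -- per-vertex structure
  have hdeg : ∀ v ∈ S, G.degree v = 3 := fun v hv => (local_struct hΔ hv (h5 v hv)).1
  have hnbr2 : ∀ v ∈ S, ∀ u ∈ G.neighborFinset v, 2 ≤ dS u :=
    fun v hv => (local_struct hΔ hv (h5 v hv)).2.1
  have hone : ∀ v ∈ S, ((G.neighborFinset v).filter (fun u => dS u = 2)).card ≤ 1 :=
    fun v hv => (local_struct hΔ hv (h5 v hv)).2.2
  have hdS3 : ∀ u, dS u ≤ 3 := fun u =>
    le_trans (card_le_card (inter_subset_left)) (by rw [card_neighborFinset_eq_degree]; exact hΔ u)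
  -- values of dS are 0, 2, or 3
  have hval : ∀ u, dS u = 0 ∨ dS u = 2 ∨ dS u = 3 := by
    intro u
    rcases Nat.eq_zero_or_pos (dS u) with h | h
    · exact Or.inl h
    · obtain ⟨v, hv⟩ := card_pos.1 h
      rw [mem_inter, mem_neighborFinset] at hv
      have hu : u ∈ G.neighborFinset v := (mem_neighborFinset _ _ _).2 hv.1.symm
      have := hnbr2 v hv.2 u hu
      have := hdS3 u
      omega
  set X := univ.filter (fun u => dS u = 2) with hX
  set Y := univ.filter (fun u => dS u = 3) with hY
  set a := S.card with ha
  have hXY : Disjoint X Y := by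
    rw [Finset.disjoint_left]
    intro u hu hu'
    rw [hX, mem_filter] at hu
    rw [hY, mem_filter] at hu'
    omega
  have hsum_const2 : ∀ T : Finset V, (∀ u ∈ T, dS u = 2) → ∑ u ∈ T, dS u = 2 * T.card := by
    intro T hT
    have : ∑ u ∈ T, dS u = ∑ _u ∈ T, 2 := Finset.sum_congr rfl hT
    rw [this, Finset.sum_const, smul_eq_mul, Nat.mul_comm]
  have hsum_const3 : ∀ T : Finset V, (∀ u ∈ T, dS u = 3) → ∑ u ∈ T, dS u = 3 * T.card := by
    intro T hT
    have : ∑ u ∈ T, dS u = ∑ _u ∈ T, 3 := Finset.sum_congr rfl hT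
    rw [this, Finset.sum_const, smul_eq_mul, Nat.mul_comm]
  have hXmem : ∀ u ∈ X, dS u = 2 := fun u hu => (mem_filter.1 hu).2
  have hYmem : ∀ u ∈ Y, dS u = 3 := fun u hu => (mem_filter.1 hu).2
  -- (A) 2|X| + 3|Y| = 3a
  have hA : 2 * X.card + 3 * Y.card = 3 * a := by
    have h1 : ∑ u ∈ univ, dS u = 3 * a := by
      have hdc := double_count G univ S
      simp only [inter_univ] at hdc
      have h2 : ∑ x ∈ S, (G.neighborFinset x).card = ∑ _x ∈ S, 3 :=
        Finset.sum_congr rfl (fun v hv => by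
          rw [card_neighborFinset_eq_degree]; exact hdeg v hv)
      rw [hdS]
      rw [hdc, h2, Finset.sum_const, smul_eq_mul, ha, Nat.mul_comm]
    have h2 : ∑ u ∈ univ, dS u = ∑ u ∈ X ∪ Y, dS u := by
      refine (Finset.sum_subset (subset_univ _) ?_).symm
      intro u _ hu
      rcases hval u with h | h | h
      · exact h
      · exact absurd (by rw [hX, mem_filter]; exact ⟨mem_univ u, h⟩)
          (fun hx => hu (mem_union_left _ hx))
      · exact absurd (by rw [hY, mem_filter]; exact ⟨mem_univ u, h⟩)
          (fun hy => hu (mem_union_right _ hy))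
    have h3 : ∑ u ∈ X ∪ Y, dS u = 2 * X.card + 3 * Y.card := by
      rw [Finset.sum_union hXY, hsum_const2 X hXmem, hsum_const3 Y hYmem]
    omega
  -- (B) |A₂| = 2|X|
  set A2 := S.filter (fun v => 1 ≤ (G.neighborFinset v ∩ X).card) with hA2
  have htX : ∀ v, G.neighborFinset v ∩ X = (G.neighborFinset v).filter (fun u => dS u = 2) := by
    intro v
    ext u
    simp [hX, mem_filter, mem_inter]
  have ht1 : ∀ v ∈ S, (G.neighborFinset v ∩ X).card ≤ 1 := by
    intro v hv; rw [htX]; exact hone v hv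
  have hB : A2.card = 2 * X.card := by
    have h1 : ∑ v ∈ S, (G.neighborFinset v ∩ X).card = ∑ u ∈ X, dS u :=
      double_count G S X
    have h2 : ∑ u ∈ X, dS u = 2 * X.card := hsum_const2 X hXmem
    have h3 : ∑ v ∈ S, (G.neighborFinset v ∩ X).card = A2.card := by
      rw [← Finset.sum_filter_add_sum_filter_not S (fun v => 1 ≤ (G.neighborFinset v ∩ X).card)]
      have hz : ∑ v ∈ S.filter (fun v => ¬ 1 ≤ (G.neighborFinset v ∩ X).card),
          (G.neighborFinset v ∩ X).card = 0 := by
        refine Finset.sum_eq_zero fun v hv => ?_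
        rw [mem_filter] at hv
        omega
      have ho : ∑ v ∈ A2, (G.neighborFinset v ∩ X).card = A2.card := by
        have he : ∑ v ∈ A2, (G.neighborFinset v ∩ X).card = ∑ _v ∈ A2, 1 := by
          refine Finset.sum_congr rfl fun v hv => ?_
          rw [hA2, mem_filter] at hv
          have := ht1 v hv.1
          omega
        rw [he, Finset.sum_const, smul_eq_mul, Nat.mul_one]
      rw [← hA2, hz, ho, Nat.add_zero]
    omega
  have hA2sub : A2 ⊆ S := filter_subset _ _
  -- (C) |Y ∩ S| ≤ 2|X ∩ S| + |S \ A2|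
  have hC : (Y ∩ S).card ≤ 2 * (X ∩ S).card + (S \ A2).card := by
    have hsub : Y ∩ S ⊆ ((X ∩ S).biUnion (fun u => G.neighborFinset u ∩ S)) ∪ (S \ A2) := by
      intro v hv
      rw [mem_inter] at hv
      obtain ⟨hvY, hvS⟩ := hv
      by_cases hvA : v ∈ A2
      · rw [hA2, mem_filter] at hvA
        obtain ⟨u, hu⟩ := card_pos.1 (lt_of_lt_of_le Nat.zero_lt_one hvA.2)
        rw [mem_inter] at hu
        have hNS : G.neighborFinset v ∩ S = G.neighborFinset v := by
          apply Finset.eq_of_subset_of_card_le inter_subset_left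
          have h3 : (G.neighborFinset v ∩ S).card = 3 := hYmem v hvY
          rw [card_neighborFinset_eq_degree, hdeg v hvS]
          omega
        have huS : u ∈ S := by
          have : u ∈ G.neighborFinset v ∩ S := by rw [hNS]; exact hu.1
          exact (mem_inter.1 this).2
        refine mem_union_left _ (mem_biUnion.2 ⟨u, mem_inter.2 ⟨hu.2, huS⟩, ?_⟩)
        exact mem_inter.2
          ⟨(mem_neighborFinset _ _ _).2 ((mem_neighborFinset _ _ _).1 hu.1).symm, hvS⟩
      · exact mem_union_right _ (mem_sdiff.2 ⟨hvS, hvA⟩)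
    calc (Y ∩ S).card ≤ _ := card_le_card hsub
      _ ≤ ((X ∩ S).biUnion (fun u => G.neighborFinset u ∩ S)).card + (S \ A2).card :=
          card_union_le _ _
      _ ≤ 2 * (X ∩ S).card + (S \ A2).card := by
          refine Nat.add_le_add_right ?_ _
          refine le_trans card_biUnion_le ?_
          have he : ∑ u ∈ X ∩ S, (G.neighborFinset u ∩ S).card = ∑ u ∈ X ∩ S, dS u := rfl
          rw [he, hsum_const2 (X ∩ S) (fun u hu => hXmem u (mem_inter.1 hu).1)]
  -- the dense subgraph W
  set W := S ∪ S.biUnion (fun v => G.neighborFinset v) with hW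
  have hSW : S ⊆ W := subset_union_left
  have hNW : ∀ v ∈ S, G.neighborFinset v ⊆ W := fun v hv u hu =>
    mem_union_right _ (mem_biUnion.2 ⟨v, hv, hu⟩)
  have hWsub : W ⊆ S ∪ ((X \ S) ∪ (Y \ S)) := by
    intro w hw
    by_cases hwS : w ∈ S
    · exact mem_union_left _ hwS
    rw [hW, mem_union] at hw
    rcases hw with hw | hw
    · exact absurd hw hwS
    obtain ⟨v, hv, hwv⟩ := mem_biUnion.1 hw
    have h2 : 2 ≤ dS w := hnbr2 v hv w hwv
    rcases hval w with h | h | h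
    · omega
    · exact mem_union_right _ (mem_union_left _ (mem_sdiff.2
        ⟨by rw [hX, mem_filter]; exact ⟨mem_univ w, h⟩, hwS⟩))
    · exact mem_union_right _ (mem_union_right _ (mem_sdiff.2
        ⟨by rw [hY, mem_filter]; exact ⟨mem_univ w, h⟩, hwS⟩))
  have hWcard : W.card ≤ a + ((X \ S).card + (Y \ S).card) := by
    calc W.card ≤ (S ∪ ((X \ S) ∪ (Y \ S))).card := card_le_card hWsub
      _ ≤ S.card + ((X \ S) ∪ (Y \ S)).card := card_union_le _ _
      _ ≤ a + ((X \ S).card + (Y \ S).card) := by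
          rw [ha]
          exact Nat.add_le_add_left (card_union_le _ _) _
  -- lower bound for the degree sum over W
  have hdisj1 : Disjoint S ((X \ S) ∪ (Y \ S)) := by
    rw [Finset.disjoint_left]
    intro w hwS hw
    rcases mem_union.1 hw with hw | hw
    · exact (mem_sdiff.1 hw).2 hwS
    · exact (mem_sdiff.1 hw).2 hwS
  have hdisj2 : Disjoint (X \ S) (Y \ S) :=
    Finset.disjoint_of_subset_left sdiff_subset
      (Finset.disjoint_of_subset_right sdiff_subset hXY)
  have hsum_lower : 3 * a + (2 * (X \ S).card + 3 * (Y \ S).card)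
      ≤ ∑ w ∈ W, (G.neighborFinset w ∩ W).card := by
    have hsubset : S ∪ ((X \ S) ∪ (Y \ S)) ⊆ W := by
      intro w hw
      rcases mem_union.1 hw with hw | hw
      · exact hSW hw
      rcases mem_union.1 hw with hw | hw
      · -- w ∈ X \ S : dS w = 2 ≥ 1, so w has a neighbor in S
        have h2 : dS w = 2 := hXmem w (mem_sdiff.1 hw).1
        obtain ⟨v, hv⟩ := card_pos.1 (by omega : 0 < dS w)
        rw [mem_inter, mem_neighborFinset] at hv
        exact hNW v hv.2 ((mem_neighborFinset _ _ _).2 hv.1.symm)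
      · have h2 : dS w = 3 := hYmem w (mem_sdiff.1 hw).1
        obtain ⟨v, hv⟩ := card_pos.1 (by omega : 0 < dS w)
        rw [mem_inter, mem_neighborFinset] at hv
        exact hNW v hv.2 ((mem_neighborFinset _ _ _).2 hv.1.symm)
    have hstep : ∑ w ∈ S ∪ ((X \ S) ∪ (Y \ S)), (G.neighborFinset w ∩ W).card
        ≤ ∑ w ∈ W, (G.neighborFinset w ∩ W).card :=
      Finset.sum_le_sum_of_subset hsubset
    have hsplit : ∑ w ∈ S ∪ ((X \ S) ∪ (Y \ S)), (G.neighborFinset w ∩ W).card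
        = ∑ w ∈ S, (G.neighborFinset w ∩ W).card
          + (∑ w ∈ X \ S, (G.neighborFinset w ∩ W).card
            + ∑ w ∈ Y \ S, (G.neighborFinset w ∩ W).card) := by
      rw [Finset.sum_union hdisj1, Finset.sum_union hdisj2]
    have hS3 : ∑ w ∈ S, (G.neighborFinset w ∩ W).card = 3 * a := by
      have he : ∑ w ∈ S, (G.neighborFinset w ∩ W).card = ∑ _w ∈ S, 3 := by
        refine Finset.sum_congr rfl fun v hv => ?_
        rw [Finset.inter_eq_left.2 (hNW v hv), card_neighborFinset_eq_degree]
        exact hdeg v hv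
      rw [he, Finset.sum_const, smul_eq_mul, ha, Nat.mul_comm]
    have hdSle : ∀ w, dS w ≤ (G.neighborFinset w ∩ W).card := fun w =>
      card_le_card (inter_subset_inter le_rfl hSW)
    have hX2 : 2 * (X \ S).card ≤ ∑ w ∈ X \ S, (G.neighborFinset w ∩ W).card := by
      have : 2 * (X \ S).card = ∑ w ∈ X \ S, dS w :=
        (hsum_const2 _ (fun u hu => hXmem u (mem_sdiff.1 hu).1)).symm
      rw [this]
      exact Finset.sum_le_sum (fun w _ => hdSle w)
    have hY3 : 3 * (Y \ S).card ≤ ∑ w ∈ Y \ S, (G.neighborFinset w ∩ W).card := by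
      have : 3 * (Y \ S).card = ∑ w ∈ Y \ S, dS w :=
        (hsum_const3 _ (fun u hu => hYmem u (mem_sdiff.1 hu).1)).symm
      rw [this]
      exact Finset.sum_le_sum (fun w _ => hdSle w)
    omega
  -- apply the handshake and the mad hypothesis
  have hhs := subgraph_handshake (G := G) W
  set E := ((⊤ : G.Subgraph).induce (↑W : Set V)).edgeSet.ncard with hE
  -- numeric facts
  have hcards : (X ∩ S).card + (X \ S).card = X.card := Finset.card_inter_add_card_sdiff X S
  have hcards' : (Y ∩ S).card + (Y \ S).card = Y.card := Finset.card_inter_add_card_sdiff Y S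
  have hSA2 : (S \ A2).card + A2.card = S.card := by
    rw [Finset.card_sdiff_add_card_eq_card hA2sub]
  have hA2a : A2.card ≤ a := le_trans (card_le_card hA2sub) le_rfl
  have hkey : 36 * W.card ≤ 13 * (2 * E) := by
    omega
  -- contradiction with hmad
  have hWne : ((⊤ : G.Subgraph).induce (↑W : Set V)).verts.Nonempty := by
    obtain ⟨v0, hv0⟩ := hS
    exact ⟨v0, by exact_mod_cast hSW hv0⟩
  have hlt := hmad _ hWne
  have hvcard : ((⊤ : G.Subgraph).induce (↑W : Set V)).verts.ncard = W.card := by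
    show (↑W : Set V).ncard = W.card
    exact Set.ncard_coe_finset W
  rw [hvcard] at hlt
  have hWpos : 0 < W.card := by
    obtain ⟨v0, hv0⟩ := hS
    exact card_pos.2 ⟨v0, hSW hv0⟩
  have hfin : (36 : ℚ) / 13 ≤ 2 * (E : ℚ) / (W.card : ℚ) := by
    rw [div_le_div_iff₀ (by norm_num) (by exact_mod_cast hWpos)]
    exact_mod_cast (by omega : 36 * W.card ≤ 2 * E * 13)
  exact absurd hlt (not_lt.2 hfin)

lemma greedy_coloring
    (P : ∀ S : Finset V, S.Nonempty →
      ∃ v ∈ S, ((S.erase v).filter (fun w => ∃ u, G.Adj v u ∧ G.Adj w u)).card ≤ 4) :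
    ∀ S : Finset V, ∃ c : V → Fin 5,
      ∀ u ∈ S, ∀ w ∈ S, u ≠ w → (∃ x, G.Adj u x ∧ G.Adj w x) → c u ≠ c w := by
  intro S
  induction S using Finset.strongInduction with
  | _ S ih =>
    rcases S.eq_empty_or_nonempty with rfl | hne
    · exact ⟨fun _ => 0, by simp⟩
    obtain ⟨v, hvS, hdeg4⟩ := P S hne
    obtain ⟨c, hc⟩ := ih (S.erase v) (erase_ssubset hvS)
    set T := (S.erase v).filter (fun w => ∃ u, G.Adj v u ∧ G.Adj w u) with hT
    have himg : (T.image c).card ≤ 4 := le_trans card_image_le hdeg4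
    have hbne : (T.image c)ᶜ.Nonempty := by
      rw [← Finset.card_pos, Finset.card_compl]
      have h5 : Fintype.card (Fin 5) = 5 := by simp
      omega
    obtain ⟨b, hb⟩ := hbne
    have hbnotin : b ∉ T.image c := mem_compl.1 hb
    refine ⟨Function.update c v b, ?_⟩
    intro u hu w hw hne2 hcom
    by_cases huv : u = v <;> by_cases hwv : w = v
    · exact absurd (huv.trans hwv.symm) hne2
    · subst huv
      rw [Function.update_self, Function.update_of_ne hwv]
      intro heq
      apply hbnotin
      rw [heq]
      refine mem_image_of_mem c ?_
      rw [hT, mem_filter, mem_erase]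
      exact ⟨⟨hwv, hw⟩, hcom⟩
    · subst hwv
      rw [Function.update_self, Function.update_of_ne huv]
      intro heq
      apply hbnotin
      rw [← heq]
      refine mem_image_of_mem c ?_
      rw [hT, mem_filter, mem_erase]
      obtain ⟨x, hx1, hx2⟩ := hcom
      exact ⟨⟨huv, hu⟩, ⟨x, hx2, hx1⟩⟩
    · rw [Function.update_of_ne huv, Function.update_of_ne hwv]
      exact hc u (mem_erase.2 ⟨huv, hu⟩) w (mem_erase.2 ⟨hwv, hw⟩) hne2 hcom

end Aux

/-- If `Δ(G) = 3` and `mad(G) < 36/13`, then `χᵢ(G) ≤ 5`. -/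
theorem injChromNum_le_five_of_maxDegree_eq_three {V : Type*} [Fintype V]
    (G : SimpleGraph V) [DecidableRel G.Adj]
    (hΔ : G.maxDegree = 3)
    (hmad : ∀ H : G.Subgraph, H.verts.Nonempty →
      (2 * H.edgeSet.ncard : ℚ) / H.verts.ncard < 36 / 13) :
    injChromNum G ≤ 5 := by
  letI : DecidableEq V := Classical.decEq V
  have hΔ' : ∀ v, G.degree v ≤ 3 := fun v => hΔ ▸ G.degree_le_maxDegree v
  obtain ⟨c, hc⟩ := greedy_coloring (exists_low_inj_degree hΔ' hmad) Finset.univ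
  have hcol : IsInjColoring G c := fun u v hne hcom =>
    hc u (Finset.mem_univ _) v (Finset.mem_univ _) hne hcom
  exact Nat.sInf_le ⟨c, hcol⟩
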